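/- Under the null hypothesis of mutual independence of the components of X and the MCAR mechanism, for a fixed index j2 and indices l_1, l_2, l_3, l_4 < j2, the mixed fourth moment E(U_{j2,l_1} U_{j2,l_2} U_{j2,l_3} U_{j2,l_4}) equals 0 whenever the multiset {l_1, l_2, l_3, l_4} has an element appearing an odd number of times (in particular when all four indices are mutually distinct, or when exactly two or exactly three of them coincide). -/

import Mathlib

open MeasureTheory ProbabilityTheory Filter Finset

namespace KendallMissing

/-- Setup: `X i k` is the `k`-th component of the `i`-th observation, `R i k` the
corresponding response (missingness) indicator with `P(R i k = 1) = q k` (MCAR,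
Bernoulli, independent across cells and of the data).  Under the null hypothesis `H₀`
of total (mutual) independence of the components, together with the i.i.d. sampling,
the whole family `{X i k} ∪ {R i k}` is mutually independent, the `X i k` are
identically distributed in `i`, and the marginals are continuous (atomless). -/
structure Setup {Ω : Type*} [MeasurableSpace Ω] (μ : Measure Ω)
    (X R : ℕ → ℕ → Ω → ℝ) (q : ℕ → ℝ) : Prop where
  isProb : IsProbabilityMeasure μ
  measX : ∀ i k, Measurable (X i k)
  measR : ∀ i k, Measurable (R i k)
  indep : iIndepFun (β := fun _ : (ℕ × ℕ) × Bool => ℝ)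
      (fun p => if p.2 then R p.1.1 p.1.2 else X p.1.1 p.1.2) μ
  identX : ∀ i k, μ.map (X i k) = μ.map (X 0 k)
  contX : ∀ i k (x : ℝ), μ {ω | X i k ω = x} = 0
  Rval : ∀ i k ω, R i k ω = 0 ∨ R i k ω = 1
  Rq : ∀ i k, μ {ω | R i k ω = 1} = ENNReal.ofReal (q k)
  q_nonneg : ∀ k, 0 ≤ q k
  q_le_one : ∀ k, q k ≤ 1

variable {Ω : Type*} [MeasurableSpace Ω]

/-- Expectation of a real random variable. -/
noncomputable def mean (μ : Measure Ω) (f : Ω → ℝ) : ℝ := ∫ ω, f ω ∂μ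

/-- Variance of a real random variable. -/
noncomputable def var (μ : Measure Ω) (f : Ω → ℝ) : ℝ :=
  ∫ ω, (f ω - mean μ f) ^ 2 ∂μ

/-- Covariance of two real random variables. -/
noncomputable def cov (μ : Measure Ω) (f g : Ω → ℝ) : ℝ :=
  ∫ ω, (f ω - mean μ f) * (g ω - mean μ g) ∂μ

/-- Completeness indicator `S i = ∏_{k<d} R i k` of the `i`-th observation. -/
noncomputable def Scomp (R : ℕ → ℕ → Ω → ℝ) (d i : ℕ) (ω : Ω) : ℝ :=
  ∏ k ∈ range d, R i k ω

/-- Complete-case Kendall tau `τ_kl^cc`. -/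
noncomputable def tauCC (X R : ℕ → ℕ → Ω → ℝ) (n d k l : ℕ) (ω : Ω) : ℝ :=
  2 / ((n : ℝ) * ((n : ℝ) - 1)) *
    ∑ i ∈ range n, ∑ j ∈ range i,
      Real.sign (X i k ω - X j k ω) * Real.sign (X i l ω - X j l ω) *
        (Scomp R d i ω * Scomp R d j ω)

/-- Complete-case test statistic `T_nd^cc = Σ_{l<k<d} (τ_kl^cc)²`. -/
noncomputable def TCC (X R : ℕ → ℕ → Ω → ℝ) (n d : ℕ) (ω : Ω) : ℝ :=
  ∑ k ∈ range d, ∑ l ∈ range k, (tauCC X R n d k l ω) ^ 2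

/-- Pairwise (cell-wise) Kendall tau `τ̃_kl`. -/
noncomputable def tauP (X R : ℕ → ℕ → Ω → ℝ) (n k l : ℕ) (ω : Ω) : ℝ :=
  2 / ((n : ℝ) * ((n : ℝ) - 1)) *
    ∑ i ∈ range n, ∑ j ∈ range i,
      Real.sign (X i k ω - X j k ω) * Real.sign (X i l ω - X j l ω) *
        (R i k ω * R j k ω * R i l ω * R j l ω)

/-- Pairwise test statistic `T̃_nd = Σ_{l<k<d} τ̃_kl²`. -/
noncomputable def Ttilde (X R : ℕ → ℕ → Ω → ℝ) (n d : ℕ) (ω : Ω) : ℝ :=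
  ∑ k ∈ range d, ∑ l ∈ range k, (tauP X R n k l ω) ^ 2

/-- The kernel `f_k(i,j) = sgn(X_ik - X_jk) R_ik R_jk`. -/
noncomputable def fker (X R : ℕ → ℕ → Ω → ℝ) (k i j : ℕ) (ω : Ω) : ℝ :=
  Real.sign (X i k ω - X j k ω) * (R i k ω * R j k ω)

/-- The `U`-statistic
`U_kl = (n(n-1)(n-2)(n-3))⁻¹ Σ_{i₁≠i₂≠i₃≠i₄} f_k(i₁,i₂) f_l(i₁,i₂) f_k(i₃,i₄) f_l(i₃,i₄)`,
the sum being over quadruples of pairwise distinct indices. -/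
noncomputable def Ustat (X R : ℕ → ℕ → Ω → ℝ) (n k l : ℕ) (ω : Ω) : ℝ :=
  (1 / ((n : ℝ) * ((n : ℝ) - 1) * ((n : ℝ) - 2) * ((n : ℝ) - 3))) *
    ∑ i1 ∈ range n, ∑ i2 ∈ range n, ∑ i3 ∈ range n, ∑ i4 ∈ range n,
      if i1 ≠ i2 ∧ i1 ≠ i3 ∧ i1 ≠ i4 ∧ i2 ≠ i3 ∧ i2 ≠ i4 ∧ i3 ≠ i4 then
        fker X R k i1 i2 ω * fker X R l i1 i2 ω * fker X R k i3 i4 ω * fker X R l i3 i4 ω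
      else 0

/-- The `U`-statistic based test statistic `T̂_nd = Σ_{l<k<d} U_kl`. -/
noncomputable def That (X R : ℕ → ℕ → Ω → ℝ) (n d : ℕ) (ω : Ω) : ℝ :=
  ∑ k ∈ range d, ∑ l ∈ range k, Ustat X R n k l ω

/-- The martingale-difference summands `Y_{n,k} = (2/√Var(T̂_nd)) Σ_{l<k} U_kl`. -/
noncomputable def Y (μ : Measure Ω) (X R : ℕ → ℕ → Ω → ℝ) (n d k : ℕ) (ω : Ω) : ℝ :=
  (2 / Real.sqrt (var μ (That X R n d))) * ∑ l ∈ range k, Ustat X R n k l ω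

/-- The σ-field `F_{m,t} = σ{(X i j, R i j) : i < m, j < t}` (0-indexed). -/
def Fsig (X R : ℕ → ℕ → Ω → ℝ) (m t : ℕ) : MeasurableSpace Ω :=
  ⨆ i ∈ Finset.range m, ⨆ j ∈ Finset.range t,
    (MeasurableSpace.comap (X i j) inferInstance ⊔ MeasurableSpace.comap (R i j) inferInstance)

end KendallMissing

namespace KendallMissing

/- ======================= auxiliary lemmas ======================= -/

section Aux

variable {Ω : Type*} [MeasurableSpace Ω] {μ : Measure Ω} {X R : ℕ → ℕ → Ω → ℝ} {q : ℕ → ℝ}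

lemma measurable_real_sign : Measurable Real.sign := by
  have h : Real.sign = fun r : ℝ => if r < 0 then (-1:ℝ) else if 0 < r then 1 else 0 := by
    funext r; rfl
  rw [h]
  exact Measurable.ite measurableSet_Iio measurable_const
    (Measurable.ite measurableSet_Ioi measurable_const measurable_const)

lemma abs_sign_le_one (x : ℝ) : |Real.sign x| ≤ 1 := by
  rcases Real.sign_apply_eq x with h | h | h <;> simp [h]

lemma abs_mul_le_one {x y : ℝ} (hx : |x| ≤ 1) (hy : |y| ≤ 1) : |x * y| ≤ 1 := by
  rw [abs_mul]; nlinarith [abs_nonneg x, abs_nonneg y]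

lemma sign_swap (x y : ℝ) : Real.sign (y - x) = -Real.sign (x - y) := by
  rw [← neg_sub, Real.sign_neg]

lemma integrable_of_bound [IsProbabilityMeasure μ] {f : Ω → ℝ}
    (hm : Measurable f) (hb : ∀ ω, |f ω| ≤ 1) : Integrable f μ :=
  (integrable_const (1:ℝ)).mono' hm.aestronglyMeasurable (ae_of_all μ hb)

/-- The coordinate family appearing in `Setup.indep`. -/
def coordF (X R : ℕ → ℕ → Ω → ℝ) : ((ℕ × ℕ) × Bool) → Ω → ℝ :=
  fun p => if p.2 then R p.1.1 p.1.2 else X p.1.1 p.1.2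

lemma coordF_false (i k : ℕ) : coordF X R ((i,k),false) = X i k := rfl
lemma coordF_true (i k : ℕ) : coordF X R ((i,k),true) = R i k := rfl

lemma measurable_coordF (hs : Setup μ X R q) (p : (ℕ × ℕ) × Bool) :
    Measurable (coordF X R p) := by
  rcases p with ⟨⟨i,k⟩, b⟩
  cases b
  · exact hs.measX i k
  · exact hs.measR i k

/-- The σ-algebra generated by all cells except the `X`-cells `(a,c)` and `(b,c)`. -/
def mT (X R : ℕ → ℕ → Ω → ℝ) (a b c : ℕ) : MeasurableSpace Ω :=
  ⨆ p ∈ ({((a,c),false),((b,c),false)} : Set ((ℕ × ℕ) × Bool))ᶜ,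
    MeasurableSpace.comap (coordF X R p) inferInstance

lemma pair_ne_fst {i a k c : ℕ} (h : i ≠ a) : ¬(i = a ∧ k = c) :=
  fun hh => h hh.1

lemma pair_ne_snd {i a k c : ℕ} (h : k ≠ c) : ¬(i = a ∧ k = c) :=
  fun hh => h hh.2

lemma measT_R (a b c i k : ℕ) : Measurable[mT X R a b c] (R i k) := by
  have hp : (((i,k),true) : (ℕ × ℕ) × Bool) ∈
      ({((a,c),false),((b,c),false)} : Set ((ℕ × ℕ) × Bool))ᶜ := by
    simp
  exact measurable_iff_comap_le.2
    (le_biSup (fun p => MeasurableSpace.comap (coordF X R p) inferInstance) hp)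

lemma measT_X (a b c i k : ℕ) (h1 : ¬(i = a ∧ k = c)) (h2 : ¬(i = b ∧ k = c)) :
    Measurable[mT X R a b c] (X i k) := by
  have hp : (((i,k),false) : (ℕ × ℕ) × Bool) ∈
      ({((a,c),false),((b,c),false)} : Set ((ℕ × ℕ) × Bool))ᶜ := by
    simp only [Set.mem_compl_iff, Set.mem_insert_iff, Set.mem_singleton_iff, not_or,
      Prod.mk.injEq]
    tauto
  exact measurable_iff_comap_le.2
    (le_biSup (fun p => MeasurableSpace.comap (coordF X R p) inferInstance) hp)

lemma measT_fker (a b c k i j : ℕ) (h1 : ¬(i = a ∧ k = c)) (h2 : ¬(i = b ∧ k = c))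
    (h3 : ¬(j = a ∧ k = c)) (h4 : ¬(j = b ∧ k = c)) :
    Measurable[mT X R a b c] (fker X R k i j) :=
  (measurable_real_sign.comp ((measT_X a b c i k h1 h2).sub (measT_X a b c j k h3 h4))).mul
    ((measT_R a b c i k).mul (measT_R a b c j k))

lemma measT_fker_col (a b c k i j : ℕ) (hk : k ≠ c) :
    Measurable[mT X R a b c] (fker X R k i j) :=
  measT_fker a b c k i j (pair_ne_snd hk) (pair_ne_snd hk) (pair_ne_snd hk) (pair_ne_snd hk)

/-- Kernel summand of the `U`-statistic. -/
noncomputable def tker (X R : ℕ → ℕ → Ω → ℝ) (k l : ℕ) (p : ℕ × ℕ × ℕ × ℕ) (ω : Ω) : ℝ :=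
  if p.1 ≠ p.2.1 ∧ p.1 ≠ p.2.2.1 ∧ p.1 ≠ p.2.2.2 ∧ p.2.1 ≠ p.2.2.1 ∧ p.2.1 ≠ p.2.2.2
      ∧ p.2.2.1 ≠ p.2.2.2 then
    fker X R k p.1 p.2.1 ω * fker X R l p.1 p.2.1 ω * fker X R k p.2.2.1 p.2.2.2 ω
      * fker X R l p.2.2.1 p.2.2.2 ω
  else 0

lemma tker_pos (X R : ℕ → ℕ → Ω → ℝ) (k l a b a2 b2 : ℕ)
    (h : a ≠ b ∧ a ≠ a2 ∧ a ≠ b2 ∧ b ≠ a2 ∧ b ≠ b2 ∧ a2 ≠ b2) (ω : Ω) :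
    tker X R k l (a, b, a2, b2) ω =
      fker X R k a b ω * fker X R l a b ω * fker X R k a2 b2 ω * fker X R l a2 b2 ω :=
  if_pos h

lemma measT_tker (a b c k l : ℕ) (hk : k ≠ c) (hl : l ≠ c) (p : ℕ × ℕ × ℕ × ℕ) :
    Measurable[mT X R a b c] (fun ω => tker X R k l p ω) := by
  unfold tker
  by_cases h : p.1 ≠ p.2.1 ∧ p.1 ≠ p.2.2.1 ∧ p.1 ≠ p.2.2.2 ∧ p.2.1 ≠ p.2.2.1
      ∧ p.2.1 ≠ p.2.2.2 ∧ p.2.2.1 ≠ p.2.2.2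
  · simp only [if_pos h]
    exact (((measT_fker_col a b c k _ _ hk).mul (measT_fker_col a b c l _ _ hl)).mul
      (measT_fker_col a b c k _ _ hk)).mul (measT_fker_col a b c l _ _ hl)
  · simp only [if_neg h]
    exact measurable_const

lemma measurable_fker (hs : Setup μ X R q) (k i j : ℕ) : Measurable (fker X R k i j) :=
  (measurable_real_sign.comp ((hs.measX i k).sub (hs.measX j k))).mul
    ((hs.measR i k).mul (hs.measR j k))

lemma measurable_tker (hs : Setup μ X R q) (k l : ℕ) (p : ℕ × ℕ × ℕ × ℕ) :
    Measurable (fun ω => tker X R k l p ω) := by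
  unfold tker
  by_cases h : p.1 ≠ p.2.1 ∧ p.1 ≠ p.2.2.1 ∧ p.1 ≠ p.2.2.2 ∧ p.2.1 ≠ p.2.2.1
      ∧ p.2.1 ≠ p.2.2.2 ∧ p.2.2.1 ≠ p.2.2.2
  · simp only [if_pos h]
    exact (((measurable_fker hs k _ _).mul (measurable_fker hs l _ _)).mul
      (measurable_fker hs k _ _)).mul (measurable_fker hs l _ _)
  · simp only [if_neg h]
    exact measurable_const

lemma abs_R_le_one (hs : Setup μ X R q) (i k : ℕ) (ω : Ω) : |R i k ω| ≤ 1 := by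
  rcases hs.Rval i k ω with h | h <;> simp [h]

lemma abs_fker_le_one (hs : Setup μ X R q) (k i j : ℕ) (ω : Ω) : |fker X R k i j ω| ≤ 1 :=
  abs_mul_le_one (abs_sign_le_one _)
    (abs_mul_le_one (abs_R_le_one hs i k ω) (abs_R_le_one hs j k ω))

lemma abs_tker_le_one (hs : Setup μ X R q) (k l : ℕ) (p : ℕ × ℕ × ℕ × ℕ) (ω : Ω) :
    |tker X R k l p ω| ≤ 1 := by
  unfold tker
  split
  · exact abs_mul_le_one (abs_mul_le_one (abs_mul_le_one (abs_fker_le_one hs k _ _ ω)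
      (abs_fker_le_one hs l _ _ ω)) (abs_fker_le_one hs k _ _ ω)) (abs_fker_le_one hs l _ _ ω)
  · simp

/-- Expansion of the `U`-statistic as a constant times a sum over quadruples. -/
lemma ustat_eq (n k l : ℕ) (ω : Ω) :
    Ustat X R n k l ω = (1 / ((n : ℝ) * ((n : ℝ) - 1) * ((n : ℝ) - 2) * ((n : ℝ) - 3))) *
      ∑ p ∈ range n ×ˢ range n ×ˢ range n ×ˢ range n, tker X R k l p ω := by
  unfold Ustat tker
  simp [Finset.sum_product]

lemma sign_sub_integral_zero (μ : Measure Ω) [IsProbabilityMeasure μ] (f g : Ω → ℝ)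
    (hf : Measurable f) (hg : Measurable g) (hind : IndepFun f g μ)
    (hid : μ.map f = μ.map g) :
    ∫ ω, Real.sign (f ω - g ω) ∂μ = 0 := by
  set ν := μ.map g with hν
  haveI : IsProbabilityMeasure ν := Measure.isProbabilityMeasure_map hg.aemeasurable
  have hmap : μ.map (fun ω => (f ω, g ω)) = ν.prod ν := by
    rw [(indepFun_iff_map_prod_eq_prod_map_map hf.aemeasurable hg.aemeasurable).1 hind, hid]
  have hmeas : Measurable (fun p : ℝ × ℝ => Real.sign (p.1 - p.2)) :=
    measurable_real_sign.comp (measurable_fst.sub measurable_snd)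
  have h1 : ∫ ω, Real.sign (f ω - g ω) ∂μ
      = ∫ p : ℝ × ℝ, Real.sign (p.1 - p.2) ∂(ν.prod ν) := by
    rw [← hmap, integral_map (hf.prodMk hg).aemeasurable hmeas.aestronglyMeasurable]
  have h2 : ∫ p : ℝ × ℝ, Real.sign (p.1 - p.2) ∂(ν.prod ν)
      = - ∫ p : ℝ × ℝ, Real.sign (p.1 - p.2) ∂(ν.prod ν) := by
    nth_rewrite 1 [← Measure.prod_swap]
    rw [integral_map measurable_swap.aemeasurable hmeas.aestronglyMeasurable]
    simp only [Prod.fst_swap, Prod.snd_swap]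
    rw [show (fun p : ℝ × ℝ => Real.sign (p.2 - p.1)) = fun p => -Real.sign (p.1 - p.2) from
      funext fun p => sign_swap _ _]
    exact integral_neg _
  rw [h1]; linarith [h2]

lemma sign_integral_zero (hs : Setup μ X R q) {a b : ℕ} (c : ℕ) (hab : a ≠ b) :
    ∫ ω, Real.sign (X a c ω - X b c ω) ∂μ = 0 := by
  haveI := hs.isProb
  have hne : (((a,c),false) : (ℕ × ℕ) × Bool) ≠ ((b,c),false) := by
    simp [hab]
  have hind : IndepFun (X a c) (X b c) μ := by
    have h := hs.indep.indepFun hne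
    simpa using h
  have hid : μ.map (X a c) = μ.map (X b c) := by
    rw [hs.identX a c, hs.identX b c]
  exact sign_sub_integral_zero μ (X a c) (X b c) (hs.measX a c) (hs.measX b c) hind hid

/-- Key independence lemma: the integral of the product of `sgn(X a c - X b c)` with any
bounded function measurable w.r.t. the other cells vanishes. -/
lemma integral_sign_mul_eq_zero (hs : Setup μ X R q) {a b : ℕ} (c : ℕ) (hab : a ≠ b)
    {H : Ω → ℝ} (hH : Measurable[mT X R a b c] H) (hHb : ∀ ω, |H ω| ≤ 1) :
    ∫ ω, Real.sign (X a c ω - X b c ω) * H ω ∂μ = 0 := by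
  haveI := hs.isProb
  have h_le : ∀ p : (ℕ × ℕ) × Bool,
      MeasurableSpace.comap (coordF X R p) inferInstance ≤ ‹MeasurableSpace Ω› :=
    fun p => (measurable_coordF hs p).comap_le
  have hIndep : Indep
      (⨆ p ∈ ({((a,c),false),((b,c),false)} : Set ((ℕ × ℕ) × Bool)),
        MeasurableSpace.comap (coordF X R p) inferInstance)
      (mT X R a b c) μ :=
    indep_biSup_compl h_le hs.indep.iIndep _
  have hXa : Measurable[⨆ p ∈ ({((a,c),false),((b,c),false)} : Set ((ℕ × ℕ) × Bool)),
      MeasurableSpace.comap (coordF X R p) inferInstance] (X a c) :=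
    measurable_iff_comap_le.2
      (le_biSup (fun p => MeasurableSpace.comap (coordF X R p) inferInstance)
        (show (((a,c),false) : (ℕ × ℕ) × Bool) ∈
          ({((a,c),false),((b,c),false)} : Set ((ℕ × ℕ) × Bool)) by simp))
  have hXb : Measurable[⨆ p ∈ ({((a,c),false),((b,c),false)} : Set ((ℕ × ℕ) × Bool)),
      MeasurableSpace.comap (coordF X R p) inferInstance] (X b c) :=
    measurable_iff_comap_le.2
      (le_biSup (fun p => MeasurableSpace.comap (coordF X R p) inferInstance)
        (show (((b,c),false) : (ℕ × ℕ) × Bool) ∈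
          ({((a,c),false),((b,c),false)} : Set ((ℕ × ℕ) × Bool)) by simp))
  have hs1 : Measurable[⨆ p ∈ ({((a,c),false),((b,c),false)} : Set ((ℕ × ℕ) × Bool)),
      MeasurableSpace.comap (coordF X R p) inferInstance]
      (fun ω => Real.sign (X a c ω - X b c ω)) :=
    measurable_real_sign.comp (hXa.sub hXb)
  have hfH : IndepFun (fun ω => Real.sign (X a c ω - X b c ω)) H μ := by
    rw [IndepFun_iff_Indep]
    exact indep_of_indep_of_le_left (indep_of_indep_of_le_right hIndep hH.comap_le) hs1.comap_le
  have hs1m : Measurable (fun ω => Real.sign (X a c ω - X b c ω)) :=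
    measurable_real_sign.comp ((hs.measX a c).sub (hs.measX b c))
  have hmT_le : mT X R a b c ≤ ‹MeasurableSpace Ω› := by
    refine iSup₂_le fun p _ => h_le p
  have hHm : Measurable H := hH.mono hmT_le le_rfl
  have hmul := hfH.integral_mul_eq_mul_integral
    (integrable_of_bound hs1m (fun ω => abs_sign_le_one _)).aestronglyMeasurable (integrable_of_bound hHm hHb).aestronglyMeasurable
  have heq : (fun ω => Real.sign (X a c ω - X b c ω) * H ω)
      = (fun ω => Real.sign (X a c ω - X b c ω)) * H := rfl
  show integral μ (fun ω => Real.sign (X a c ω - X b c ω) * H ω) = 0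
  rw [heq, hmul, sign_integral_zero hs c hab, zero_mul]

/-- From oddness of a multiplicity, extract an index whose value is attained only once. -/
lemma exists_unique_class (l : Fin 4 → ℕ)
    (hodd : ∃ i : Fin 4, Odd ((Finset.univ.filter fun j : Fin 4 => l j = l i).card)) :
    ∃ i : Fin 4, ∀ j, l j = l i → j = i := by
  classical
  obtain ⟨i, hi⟩ := hodd
  set A := Finset.univ.filter (fun j : Fin 4 => l j = l i) with hA
  have hiA : i ∈ A := by simp [hA]
  have hpos : 0 < A.card := Finset.card_pos.2 ⟨i, hiA⟩
  have hle : A.card ≤ 4 := le_trans (Finset.card_le_univ A) (by simp)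
  obtain ⟨m, hm⟩ := hi
  have h13 : A.card = 1 ∨ A.card = 3 := by omega
  rcases h13 with h | h
  · refine ⟨i, fun j hj => ?_⟩
    have hjA : j ∈ A := by simp [hA, hj]
    obtain ⟨x, hx⟩ := Finset.card_eq_one.1 h
    rw [hx, Finset.mem_singleton] at hjA hiA
    rw [hjA, hiA]
  · have hc : (Finset.univ \ A).card = 1 := by
      rw [Finset.card_sdiff_of_subset (Finset.subset_univ A)]
      simp [h]
    obtain ⟨x, hx⟩ := Finset.card_eq_one.1 hc
    have hxA : x ∉ A := by
      have hx' : x ∈ Finset.univ \ A := by rw [hx]; exact Finset.mem_singleton_self x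
      exact (Finset.mem_sdiff.1 hx').2
    refine ⟨x, fun j hj => ?_⟩
    by_contra hne
    have hjA : j ∈ A := by
      by_contra hjA
      have : j ∈ Finset.univ \ A := Finset.mem_sdiff.2 ⟨Finset.mem_univ _, hjA⟩
      rw [hx, Finset.mem_singleton] at this
      exact hne this
    have hji : l j = l i := (Finset.mem_filter.1 hjA).2
    exact hxA (Finset.mem_filter.2 ⟨Finset.mem_univ _, hj ▸ hji⟩)

/-- The integral of each monomial in the expansion vanishes. -/
lemma term_integral_zero (hs : Setup μ X R q) (j2 : ℕ) (l : Fin 4 → ℕ) (hl : ∀ i, l i < j2)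
    (i0 : Fin 4) (hi0 : ∀ j, l j = l i0 → j = i0) (g : Fin 4 → ℕ × ℕ × ℕ × ℕ) :
    ∫ ω, ∏ j : Fin 4, tker X R j2 (l j) (g j) ω ∂μ = 0 := by
  classical
  haveI := hs.isProb
  rcases hgi : g i0 with ⟨a, b, a2, b2⟩
  by_cases hdis : a ≠ b ∧ a ≠ a2 ∧ a ≠ b2 ∧ b ≠ a2 ∧ b ≠ b2 ∧ a2 ≠ b2
  · obtain ⟨h12, h13, h14, h23, h24, h34⟩ := hdis
    set c := l i0 with hc
    have hj2c : j2 ≠ c := (hl i0).ne'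
    set H : Ω → ℝ := (fun ω =>
      R a c ω * R b c ω * fker X R j2 a b ω * fker X R j2 a2 b2 ω * fker X R c a2 b2 ω *
        ∏ j ∈ Finset.univ.erase i0, tker X R j2 (l j) (g j) ω) with hHdef
    have hsplit : ∀ ω, ∏ j : Fin 4, tker X R j2 (l j) (g j) ω
        = Real.sign (X a c ω - X b c ω) * H ω := by
      intro ω
      rw [← Finset.mul_prod_erase Finset.univ _ (Finset.mem_univ i0), hgi,
        tker_pos X R j2 (l i0) a b a2 b2 ⟨h12, h13, h14, h23, h24, h34⟩ ω]
      simp only [hHdef, ← hc]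
      unfold fker
      ring
    have hHmeas : Measurable[mT X R a b c] H := by
      rw [hHdef]
      refine (((((measT_R a b c a c).mul (measT_R a b c b c)).mul
        (measT_fker_col a b c j2 a b hj2c)).mul
        (measT_fker_col a b c j2 a2 b2 hj2c)).mul
        (measT_fker a b c c a2 b2 (pair_ne_fst (Ne.symm h13)) (pair_ne_fst (Ne.symm h23))
          (pair_ne_fst (Ne.symm h14)) (pair_ne_fst (Ne.symm h24)))).mul ?_
      refine Finset.measurable_prod _ fun j hj => ?_
      have hjne : j ≠ i0 := (Finset.mem_erase.1 hj).1
      have hlj : l j ≠ c := fun hh => hjne (hi0 j hh)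
      exact measT_tker a b c j2 (l j) hj2c hlj (g j)
    have hHb : ∀ ω, |H ω| ≤ 1 := by
      intro ω
      simp only [hHdef]
      refine abs_mul_le_one (abs_mul_le_one (abs_mul_le_one (abs_mul_le_one
        (abs_mul_le_one (abs_R_le_one hs a c ω) (abs_R_le_one hs b c ω))
        (abs_fker_le_one hs j2 a b ω)) (abs_fker_le_one hs j2 a2 b2 ω))
        (abs_fker_le_one hs c a2 b2 ω)) ?_
      rw [Finset.abs_prod]
      exact Finset.prod_le_one (fun _ _ => abs_nonneg _)
        (fun j _ => abs_tker_le_one hs j2 (l j) (g j) ω)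
    calc ∫ ω, ∏ j : Fin 4, tker X R j2 (l j) (g j) ω ∂μ
        = ∫ ω, Real.sign (X a c ω - X b c ω) * H ω ∂μ :=
          integral_congr_ae (ae_of_all _ hsplit)
      _ = 0 := integral_sign_mul_eq_zero hs c h12 hHmeas hHb
  · have hzero : ∀ ω, ∏ j : Fin 4, tker X R j2 (l j) (g j) ω = 0 := by
      intro ω
      refine Finset.prod_eq_zero (Finset.mem_univ i0) ?_
      rw [hgi]
      exact if_neg hdis
    rw [integral_congr_ae (ae_of_all _ hzero)]
    exact integral_zero _ _

/-- Each summand of the expanded product is integrable. -/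
lemma integrable_term (hs : Setup μ X R q) (j2 : ℕ) (l : Fin 4 → ℕ)
    (g : Fin 4 → ℕ × ℕ × ℕ × ℕ) :
    Integrable (fun ω => ∏ j : Fin 4, tker X R j2 (l j) (g j) ω) μ := by
  haveI := hs.isProb
  refine integrable_of_bound (Finset.measurable_prod _ fun j _ => measurable_tker hs j2 (l j) (g j)) ?_
  intro ω
  rw [Finset.abs_prod]
  exact Finset.prod_le_one (fun _ _ => abs_nonneg _)
    (fun j _ => abs_tker_le_one hs j2 (l j) (g j) ω)

end Aux


/-- Under `H₀` and MCAR, for a fixed index `j₂` and indices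
`l 0, l 1, l 2, l 3 < j₂`, the mixed fourth moment
`E(U_{j₂,l 0} U_{j₂,l 1} U_{j₂,l 2} U_{j₂,l 3})` vanishes whenever some element of the
multiset `{l 0, l 1, l 2, l 3}` appears an odd number of times (in particular when all
four indices are distinct, or when exactly two or exactly three of them coincide). -/
theorem mixed_fourth_moment_vanishes {Ω : Type*} [MeasurableSpace Ω] (μ : Measure Ω)
    (X R : ℕ → ℕ → Ω → ℝ) (q : ℕ → ℝ) (hs : Setup μ X R q)
    (n j2 : ℕ) (l : Fin 4 → ℕ) (hl : ∀ i, l i < j2)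
    (hodd : ∃ i : Fin 4, Odd ((Finset.univ.filter fun j : Fin 4 => l j = l i).card)) :
    ∫ ω, Ustat X R n j2 (l 0) ω * Ustat X R n j2 (l 1) ω
        * Ustat X R n j2 (l 2) ω * Ustat X R n j2 (l 3) ω ∂μ = 0 := by
  classical
  haveI := hs.isProb
  obtain ⟨i0, hi0⟩ := exists_unique_class l hodd
  have hrw : ∀ ω : Ω, Ustat X R n j2 (l 0) ω * Ustat X R n j2 (l 1) ω * Ustat X R n j2 (l 2) ω
        * Ustat X R n j2 (l 3) ω
      = (1 / ((n : ℝ) * ((n : ℝ) - 1) * ((n : ℝ) - 2) * ((n : ℝ) - 3))) ^ 4 *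
        ∑ g ∈ Fintype.piFinset
            (fun _ : Fin 4 => range n ×ˢ range n ×ˢ range n ×ˢ range n),
          ∏ j : Fin 4, tker X R j2 (l j) (g j) ω := by
    intro ω
    rw [← Fin.prod_univ_four (fun j : Fin 4 => Ustat X R n j2 (l j) ω)]
    calc ∏ j : Fin 4, Ustat X R n j2 (l j) ω
        = ∏ j : Fin 4, ((1 / ((n : ℝ) * ((n : ℝ) - 1) * ((n : ℝ) - 2) * ((n : ℝ) - 3))) *
            ∑ p ∈ range n ×ˢ range n ×ˢ range n ×ˢ range n, tker X R j2 (l j) p ω) :=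
          Finset.prod_congr rfl fun j _ => ustat_eq n j2 (l j) ω
      _ = _ := by
          rw [Finset.prod_mul_distrib, Finset.prod_const, Finset.card_univ, Fintype.card_fin,
            Finset.prod_univ_sum]
  rw [integral_congr_ae (ae_of_all _ hrw), integral_const_mul,
    integral_finset_sum _ (fun g _ => integrable_term hs j2 l g),
    Finset.sum_eq_zero (fun g _ => term_integral_zero hs j2 l hl i0 hi0 g), mul_zero]

end KendallMissing
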